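/- Let K, L ∈ ℕ and let Q be a homogeneous real polynomial in L variables with deg Q > K. If Q does not lie in ℚ[n]+ℝ, then the set of (h₁,…,h_K) ∈ (ℤ^L)^K such that the polynomial n ↦ Δ^K Q(n,h₁,…,h_K) lies in ℚ[n]+ℝ has upper Banach density 0; equivalently, the set of (h₁,…,h_K) ∈ (ℤ^L)^K for which Δ^K Q(·,h₁,…,h_K) does not lie in ℚ[n]+ℝ has density 1. -/

import Mathlib

noncomputable section

open Filter in
open scoped Classical in
/-- The upper Banach density of a subset of `ι → ℤ`:
`d*(E) = limsup_{N→∞} sup_{t} |(E−t) ∩ {1,…,N}^ι| / N^{|ι|}`. -/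
noncomputable def upperBanachDensity {ι : Type*} [Fintype ι] [DecidableEq ι]
    (E : Set (ι → ℤ)) : ℝ :=
  limsup (fun N : ℕ =>
      ⨆ t : ι → ℤ,
        ((((Finset.Icc (fun _ => (1 : ℤ)) (fun _ => (N : ℤ))).filter
              fun x => x + t ∈ E).card : ℝ) /
          (N : ℝ) ^ Fintype.card ι))
    atTop

/-- The iterated difference operator `Δ^K`, acting on functions on `ℤ^L`:
`ΔP(n, h₁, …, h_K) = P(n + h_K, h₁, …, h_{K−1}) − P(n, h₁, …, h_{K−1})`. -/
def deltaIter {L : ℕ} {α : Type*} [AddCommGroup α] :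
    (K : ℕ) → ((Fin L → ℤ) → α) → (Fin L → ℤ) → (Fin K → Fin L → ℤ) → α
  | 0, f, n, _ => f n
  | K + 1, f, n, h =>
      deltaIter K f (n + h (Fin.last K)) (Fin.init h) - deltaIter K f n (Fin.init h)

/-- A function `ℤ^L → ℝ` agrees with a polynomial in `ℚ[n] + ℝ`, i.e. with a rational
polynomial plus a real constant. -/
def IsRatPlusConst {L : ℕ} (P : (Fin L → ℤ) → ℝ) : Prop :=
  ∃ (R : MvPolynomial (Fin L) ℚ) (c : ℝ), ∀ n : Fin L → ℤ,
    P n = MvPolynomial.eval (fun i => ((n i : ℤ) : ℝ)) (MvPolynomial.map (algebraMap ℚ ℝ) R) + c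

/-! ### Auxiliary lemmas -/

open MvPolynomial in
open scoped Classical in
lemma aux_coeff_sum_monomial {σ R : Type*} [CommSemiring R] (s : Finset (σ →₀ ℕ))
    (g : (σ →₀ ℕ) → R) (m : σ →₀ ℕ) :
    MvPolynomial.coeff m (∑ m' ∈ s, MvPolynomial.monomial m' (g m')) =
      if m ∈ s then g m else 0 := by
  classical
  rw [MvPolynomial.coeff_sum]
  simp only [MvPolynomial.coeff_monomial]
  rw [Finset.sum_ite_eq' s m g]

lemma aux_poly_int_vanish (p : Polynomial ℝ) (h : ∀ t : ℤ, p.eval ((t : ℤ) : ℝ) = 0) :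
    p = 0 := by
  apply Polynomial.eq_zero_of_infinite_isRoot
  apply Set.Infinite.mono (s := Set.range ((↑) : ℤ → ℝ))
  · rintro _ ⟨t, rfl⟩; exact h t
  · exact Set.infinite_range_of_injective Int.cast_injective

open MvPolynomial in
lemma aux_int_vanish : ∀ {m : ℕ} (p : MvPolynomial (Fin m) ℝ),
    (∀ v : Fin m → ℤ, MvPolynomial.eval (fun i => ((v i : ℤ) : ℝ)) p = 0) → p = 0 := by
  intro m
  induction m with
  | zero =>
    intro p hp
    rw [MvPolynomial.eq_C_of_isEmpty p]
    have := hp (fun _ => 0)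
    rw [MvPolynomial.eq_C_of_isEmpty p, MvPolynomial.eval_C] at this
    rw [this, map_zero]
  | succ m ih =>
    intro p hp
    have key : ∀ w : Fin m → ℤ, ∀ k : ℕ,
        MvPolynomial.eval (fun i => ((w i : ℤ) : ℝ)) ((MvPolynomial.finSuccEquiv ℝ m p).coeff k)
          = 0 := by
      intro w k
      have h2 : (Polynomial.map (MvPolynomial.eval fun i => ((w i : ℤ) : ℝ))
          (MvPolynomial.finSuccEquiv ℝ m p)) = 0 := by
        apply aux_poly_int_vanish
        intro t
        have hcons : (fun i => (((Fin.cons t w : Fin (m + 1) → ℤ) i : ℤ) : ℝ))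
            = (Fin.cons ((t : ℤ) : ℝ) (fun i => ((w i : ℤ) : ℝ)) : Fin (m + 1) → ℝ) := by
          funext i
          induction i using Fin.cases <;> simp
        have h5 := hp (Fin.cons t w)
        rw [hcons, MvPolynomial.eval_eq_eval_mv_eval'] at h5
        exact h5
      have := congrArg (fun r => Polynomial.coeff r k) h2
      simpa [Polynomial.coeff_map] using this
    have hq : MvPolynomial.finSuccEquiv ℝ m p = 0 :=
      Polynomial.ext fun k => by
        rw [Polynomial.coeff_zero]
        exact ih _ (fun w => key w k)
    exact (MvPolynomial.finSuccEquiv ℝ m).injective (by rw [hq, map_zero])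

/-! ### The one-variable difference operator -/

open Polynomial in
def auxSd (p : Polynomial ℝ) : Polynomial ℝ := p.comp (Polynomial.X + 1) - p

open Polynomial in
lemma auxSd_eval (p : Polynomial ℝ) (x : ℝ) :
    (auxSd p).eval x = p.eval (x + 1) - p.eval x := by
  simp [auxSd, Polynomial.eval_comp]

open Polynomial in
lemma auxSd_coeff (p : Polynomial ℝ) (hd : 0 < p.natDegree) :
    (auxSd p).coeff (p.natDegree - 1) = p.natDegree * p.coeff p.natDegree := by
  set d := p.natDegree with hdd
  have hcomp : (p.comp (X + 1)).coeff (d - 1)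
      = ∑ e ∈ p.support, p.coeff e * ((e.choose (d - 1) : ℝ)) := by
    rw [comp_eq_sum_left, Polynomial.sum, finset_sum_coeff]
    refine Finset.sum_congr rfl fun e he => ?_
    rw [coeff_C_mul, Polynomial.coeff_X_add_one_pow]
  have hsplit : ∑ e ∈ p.support, p.coeff e * ((e.choose (d - 1) : ℝ))
      = ∑ e ∈ ({d - 1, d} : Finset ℕ), p.coeff e * ((e.choose (d - 1) : ℝ)) := by
    rw [← Finset.sum_filter_of_ne (p := fun e => e ∈ ({d - 1, d} : Finset ℕ))]
    · apply Finset.sum_subset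
      · intro e he
        exact (Finset.mem_filter.mp he).2
      · intro e he hnot
        have : p.coeff e = 0 := by
          by_contra hne
          exact hnot (Finset.mem_filter.mpr ⟨Polynomial.mem_support_iff.mpr hne, he⟩)
        rw [this, zero_mul]
    · intro e he hne
      by_contra hmem
      have h1 : e ≤ d := Polynomial.le_natDegree_of_mem_supp e he
      have h2 : e.choose (d - 1) ≠ 0 := by
        intro h0
        rw [h0] at hne
        simp at hne
      have h3 : d - 1 ≤ e := Nat.le_of_lt_succ (by
        by_contra hlt
        exact h2 (Nat.choose_eq_zero_of_lt (by omega)))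
      simp only [Finset.mem_insert, Finset.mem_singleton] at hmem
      omega
  have hpair : ∑ e ∈ ({d - 1, d} : Finset ℕ), p.coeff e * ((e.choose (d - 1) : ℝ))
      = p.coeff (d - 1) + p.coeff d * d := by
    rw [Finset.sum_pair (by omega)]
    rw [Nat.choose_self]
    have : d.choose (d - 1) = d := by
      rw [Nat.choose_symm (by omega), Nat.choose_one_right]
    rw [this]
    push_cast
    ring
  rw [auxSd, Polynomial.coeff_sub, hcomp, hsplit, hpair]
  ring

open Polynomial in
lemma auxSd_natDegree (p : Polynomial ℝ) (hd : 0 < p.natDegree) :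
    auxSd p ≠ 0 ∧ (auxSd p).natDegree = p.natDegree - 1 := by
  have hp0 : p ≠ 0 := fun h => by simp [h] at hd
  have hco := auxSd_coeff p hd
  have hcne : (auxSd p).coeff (p.natDegree - 1) ≠ 0 := by
    rw [hco]
    apply mul_ne_zero
    · exact Nat.cast_ne_zero.mpr (by omega)
    · rw [Polynomial.coeff_natDegree]
      exact Polynomial.leadingCoeff_ne_zero.mpr hp0
  have hne : auxSd p ≠ 0 := fun h => hcne (by simp [h])
  have hXC : (X + (1 : Polynomial ℝ)) = X + C 1 := by rw [map_one]
  have hnd1 : (X + (1 : Polynomial ℝ)).natDegree = 1 := by rw [hXC]; exact natDegree_X_add_C 1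
  have hlc : (p.comp (X + 1)).leadingCoeff = p.leadingCoeff := by
    rw [Polynomial.leadingCoeff_comp (by rw [hnd1]; exact one_ne_zero)]
    rw [hXC, Polynomial.leadingCoeff_X_add_C, one_pow, mul_one]
  have hcompne : p.comp (X + 1) ≠ 0 := by
    intro h
    apply hp0
    rw [← Polynomial.leadingCoeff_eq_zero, ← hlc, h, Polynomial.leadingCoeff_zero]
  have hdeg : (p.comp (X + 1)).degree = p.degree := by
    rw [Polynomial.degree_eq_natDegree hcompne, Polynomial.degree_eq_natDegree hp0,
      Polynomial.natDegree_comp, hnd1, mul_one]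
  have hub : (auxSd p).degree < p.degree := by
    have := Polynomial.degree_sub_lt hdeg hcompne hlc
    rw [← hdeg]
    exact this
  refine ⟨hne, ?_⟩
  have hlt : (auxSd p).natDegree < p.natDegree := Polynomial.natDegree_lt_natDegree hne hub
  have hge : p.natDegree - 1 ≤ (auxSd p).natDegree := Polynomial.le_natDegree_of_ne_zero hcne
  omega

lemma auxSd_iter : ∀ (K : ℕ) (p : Polynomial ℝ), K < p.natDegree →
    auxSd^[K] p ≠ 0 ∧ (auxSd^[K] p).natDegree = p.natDegree - K := by
  intro K
  induction K with
  | zero =>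
    intro p h
    refine ⟨fun h0 => ?_, by simp⟩
    rw [Function.iterate_zero_apply] at h0
    rw [h0] at h
    simp at h
  | succ k ih =>
    intro p h
    have h0 : 0 < p.natDegree := by omega
    obtain ⟨h1, h2⟩ := auxSd_natDegree p h0
    have hk : k < (auxSd p).natDegree := by omega
    obtain ⟨h3, h4⟩ := ih (auxSd p) hk
    rw [Function.iterate_succ_apply]
    exact ⟨h3, by rw [h4, h2]; omega⟩

/-! ### Sums over powersets -/

lemma aux_sum_powerset_map {α β M : Type*} [DecidableEq α] [DecidableEq β] [AddCommMonoid M]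
    (s : Finset α) (e : α ↪ β) (f : Finset β → M) :
    ∑ t ∈ (s.map e).powerset, f t = ∑ t ∈ s.powerset, f (t.map e) := by
  induction s using Finset.induction generalizing f with
  | empty => simp
  | @insert a s ha ih =>
    have hea : e a ∉ s.map e := by
      intro hmem
      rcases Finset.mem_map.mp hmem with ⟨b, hb, hbe⟩
      exact ha (by rwa [← e.injective hbe])
    rw [Finset.map_insert, Finset.sum_powerset_insert hea, Finset.sum_powerset_insert ha, ih f,
      ih (fun t => f (insert (e a) t))]
    simp only [Finset.map_insert]

/-! ### deltaIter lemmas -/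

lemma deltaIter_linmap {L : ℕ} (φ : ℝ →ₗ[ℚ] ℝ) :
    ∀ (K : ℕ) (f : (Fin L → ℤ) → ℝ) (n : Fin L → ℤ) (h : Fin K → Fin L → ℤ),
      deltaIter K (fun x => φ (f x)) n h = φ (deltaIter K f n h) := by
  intro K
  induction K with
  | zero => intro f n h; rfl
  | succ k ih =>
    intro f n h
    show deltaIter k _ _ _ - deltaIter k _ _ _ = _
    rw [ih, ih, ← map_sub]
    rfl

lemma deltaIter_sum {L : ℕ} :
    ∀ (K : ℕ) (f : (Fin L → ℤ) → ℝ) (n : Fin L → ℤ) (h : Fin K → Fin L → ℤ),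
      deltaIter K f n h =
        ∑ S ∈ (Finset.univ : Finset (Fin K)).powerset,
          (-1 : ℝ) ^ (K + S.card) * f (n + ∑ i ∈ S, h i) := by
  intro K
  induction K with
  | zero =>
    intro f n h
    simp [deltaIter, Finset.powerset_empty]
  | succ k ih =>
    intro f n h
    have hlast : Fin.last k ∉ Finset.univ.map Fin.castSuccEmb := by
      simp only [Finset.mem_map]
      rintro ⟨b, -, hb⟩
      exact absurd hb (Fin.castSucc_lt_last b).ne
    show deltaIter k f (n + h (Fin.last k)) (Fin.init h) - deltaIter k f n (Fin.init h) = _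
    rw [ih, ih, Fin.univ_castSuccEmb, Finset.cons_eq_insert,
      Finset.sum_powerset_insert hlast, aux_sum_powerset_map, aux_sum_powerset_map]
    have e1 : ∀ T ∈ (Finset.univ : Finset (Fin k)).powerset,
        (-1 : ℝ) ^ (k + 1 + (T.map Fin.castSuccEmb).card) * f (n + ∑ i ∈ T.map Fin.castSuccEmb, h i)
          = -((-1 : ℝ) ^ (k + T.card) * f (n + ∑ j ∈ T, Fin.init h j)) := by
      intro T _
      rw [Finset.card_map, Finset.sum_map]
      have hsum : ∑ j ∈ T, h (Fin.castSuccEmb j) = ∑ j ∈ T, Fin.init h j := by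
        refine Finset.sum_congr rfl fun j _ => rfl
      rw [hsum, show k + 1 + T.card = (k + T.card) + 1 by omega, pow_succ]
      ring
    have e2 : ∀ T ∈ (Finset.univ : Finset (Fin k)).powerset,
        (-1 : ℝ) ^ (k + 1 + (insert (Fin.last k) (T.map Fin.castSuccEmb)).card)
            * f (n + ∑ i ∈ insert (Fin.last k) (T.map Fin.castSuccEmb), h i)
          = (-1 : ℝ) ^ (k + T.card) * f (n + h (Fin.last k) + ∑ j ∈ T, Fin.init h j) := by
      intro T _
      have hTlast : Fin.last k ∉ T.map Fin.castSuccEmb := by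
        intro hmem
        rcases Finset.mem_map.mp hmem with ⟨b, -, hb⟩
        exact absurd hb (Fin.castSucc_lt_last b).ne
      rw [Finset.card_insert_of_notMem hTlast, Finset.sum_insert hTlast,
        Finset.card_map, Finset.sum_map]
      have hsum : ∑ j ∈ T, h (Fin.castSuccEmb j) = ∑ j ∈ T, Fin.init h j := by
        refine Finset.sum_congr rfl fun j _ => rfl
      rw [hsum, show k + 1 + (T.card + 1) = (k + T.card) + 2 by omega, pow_add]
      rw [show n + (h (Fin.last k) + ∑ j ∈ T, Fin.init h j)
        = n + h (Fin.last k) + ∑ j ∈ T, Fin.init h j by rw [add_assoc]]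
      ring
    rw [Finset.sum_congr rfl e1, Finset.sum_congr rfl e2, Finset.sum_neg_distrib]
    rw [sub_eq_neg_add]

lemma deltaIter_const {L : ℕ} (f : (Fin L → ℤ) → ℝ) (v : Fin L → ℤ) (q : Polynomial ℝ)
    (hq : ∀ t : ℤ, f (t • v) = q.eval ((t : ℤ) : ℝ)) :
    ∀ (K : ℕ) (t : ℤ), deltaIter K f (t • v) (fun _ => v) = (auxSd^[K] q).eval ((t : ℤ) : ℝ) := by
  intro K
  induction K with
  | zero => intro t; exact hq t
  | succ k ih =>
    intro t
    show deltaIter k f (t • v + v) (Fin.init fun _ => v)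
        - deltaIter k f (t • v) (Fin.init fun _ => v) = _
    have hinit : (Fin.init fun _ : Fin (k + 1) => v) = fun _ : Fin k => v := rfl
    have h1 : t • v + v = (t + 1) • v := by rw [add_smul, one_smul]
    rw [hinit, h1, ih, ih, Function.iterate_succ_apply', auxSd_eval]
    push_cast
    ring

/-! ### A Schwartz–Zippel style counting bound -/

set_option maxHeartbeats 1000000 in
open scoped Classical in
lemma aux_SZ : ∀ (m : ℕ) (p : MvPolynomial (Fin m) ℝ), p ≠ 0 →
    ∀ (S : Fin m → Finset ℝ) (N : ℕ), (∀ i, (S i).card ≤ N) →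
    N * ((Fintype.piFinset S).filter (fun x => MvPolynomial.eval x p = 0)).card
      ≤ p.totalDegree * N ^ m := by
  intro m
  induction m with
  | zero =>
    intro p hp S N _
    have hempty : ((Fintype.piFinset S).filter (fun x => MvPolynomial.eval x p = 0)) = ∅ := by
      rw [Finset.eq_empty_iff_forall_notMem]
      intro x hx
      rw [Finset.mem_filter] at hx
      apply hp
      rw [MvPolynomial.eq_C_of_isEmpty p] at hx ⊢
      rw [MvPolynomial.eval_C] at hx
      rw [hx.2, map_zero]
    rw [hempty]
    simp
  | succ m ih =>
    intro p hp S N hS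
    set q := MvPolynomial.finSuccEquiv ℝ m p with hqdef
    have hq0 : q ≠ 0 := by
      intro h
      exact hp ((MvPolynomial.finSuccEquiv ℝ m).injective (by rw [map_zero]; exact h))
    set k := q.natDegree with hk
    set c := q.leadingCoeff with hc
    have hc0 : c ≠ 0 := Polynomial.leadingCoeff_ne_zero.mpr hq0
    have hdegs : c.totalDegree + k ≤ p.totalDegree := by
      have := MvPolynomial.totalDegree_coeff_finSuccEquiv_add_le p k
        (by rw [← hqdef, Polynomial.coeff_natDegree]; exact hc0)
      rw [← hqdef] at this
      exact this
    set S' : Fin m → Finset ℝ := fun i => S i.succ with hS'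
    set Z := (Fintype.piFinset S).filter (fun x => MvPolynomial.eval x p = 0) with hZ
    set Z₁ := (Fintype.piFinset S).filter
      (fun x => MvPolynomial.eval (Fin.tail x) c = 0) with hZ₁
    set Z₂ := (Fintype.piFinset S).filter
      (fun x => MvPolynomial.eval (Fin.tail x) c ≠ 0 ∧ MvPolynomial.eval x p = 0) with hZ₂
    have hsub : Z ⊆ Z₁ ∪ Z₂ := by
      intro x hx
      rw [hZ, Finset.mem_filter] at hx
      rw [Finset.mem_union, hZ₁, hZ₂, Finset.mem_filter, Finset.mem_filter]
      by_cases hcx : MvPolynomial.eval (Fin.tail x) c = 0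
      · exact Or.inl ⟨hx.1, hcx⟩
      · exact Or.inr ⟨hx.1, hcx, hx.2⟩
    have hcard : Z.card ≤ Z₁.card + Z₂.card :=
      le_trans (Finset.card_le_card hsub) (Finset.card_union_le _ _)
    have hevalkey : ∀ x : Fin (m + 1) → ℝ, MvPolynomial.eval x p
        = Polynomial.eval (x 0) (q.map (MvPolynomial.eval (Fin.tail x))) := by
      intro x
      have := MvPolynomial.eval_eq_eval_mv_eval' (Fin.tail x) (x 0) p
      rw [Fin.cons_self_tail] at this
      exact this
    set W₁ := (Fintype.piFinset S').filter (fun w => MvPolynomial.eval w c = 0) with hW₁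
    have htail : ∀ x ∈ Fintype.piFinset S, Fin.tail x ∈ Fintype.piFinset S' := by
      intro x hx
      rw [Fintype.mem_piFinset]
      intro i
      exact (Fintype.mem_piFinset.mp hx) i.succ
    have hZ1card : Z₁.card ≤ N * W₁.card := by
      apply Finset.card_le_mul_card_image_of_maps_to (f := fun x => Fin.tail x)
      · intro x hx
        rw [hZ₁, Finset.mem_filter] at hx
        rw [hW₁, Finset.mem_filter]
        exact ⟨htail x hx.1, hx.2⟩
      · intro w _
        refine le_trans (Finset.card_le_card_of_injOn (fun x => x 0) ?_ ?_) (hS 0)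
        · intro x hx
          rw [Finset.mem_coe, Finset.mem_filter, hZ₁, Finset.mem_filter] at hx
          exact (Fintype.mem_piFinset.mp hx.1.1) 0
        · intro x hx y hy hxy
          simp only [Finset.mem_coe, Finset.mem_filter] at hx hy
          have hxy' : x 0 = y 0 := hxy
          rw [← Fin.cons_self_tail x, ← Fin.cons_self_tail y, hx.2, hy.2, hxy']
    have ihc := ih c hc0 S' N (fun i => hS i.succ)
    rw [← hW₁] at ihc
    have hZ2card : Z₂.card ≤ k * (Fintype.piFinset S').card := by
      refine Finset.card_le_mul_card_image_of_maps_to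
        (f := fun x : Fin (m + 1) → ℝ => (Fin.tail x : Fin m → ℝ)) (s := Z₂)
        (t := (Fintype.piFinset S' : Finset (Fin m → ℝ))) ?_ k ?_
      · intro x hx
        rw [hZ₂, Finset.mem_filter] at hx
        exact htail x hx.1
      · intro w _
        set qw := q.map (MvPolynomial.eval w) with hqw
        refine le_trans
          (Finset.card_le_card_of_injOn (t := qw.roots.toFinset) (fun x => x 0) ?_ ?_) ?_
        · intro x hx
          rw [Finset.mem_coe, Finset.mem_filter, hZ₂, Finset.mem_filter] at hx
          obtain ⟨⟨_, hcx, hpx⟩, hxw⟩ := hx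
          have hxw' : Fin.tail x = w := hxw
          rw [hxw'] at hcx
          show x 0 ∈ qw.roots.toFinset
          have hqwne : qw ≠ 0 := by
            intro h0
            apply hcx
            have := congrArg (fun r => Polynomial.coeff r k) h0
            simpa [hqw, hk, hc, Polynomial.coeff_map, Polynomial.coeff_natDegree] using this
          rw [Multiset.mem_toFinset, Polynomial.mem_roots hqwne]
          rw [hevalkey x, hxw'] at hpx
          exact hpx
        · intro x hx y hy hxy
          simp only [Finset.mem_coe, Finset.mem_filter] at hx hy
          have hxy' : x 0 = y 0 := hxy
          rw [← Fin.cons_self_tail x, ← Fin.cons_self_tail y, hx.2, hy.2, hxy']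
        · refine le_trans (Multiset.toFinset_card_le _) (le_trans (Polynomial.card_roots' _) ?_)
          exact Polynomial.natDegree_map_le
    have hW2 : (Fintype.piFinset S').card ≤ N ^ m := by
      rw [Fintype.card_piFinset]
      calc ∏ i, (S' i).card ≤ ∏ _i : Fin m, N :=
            Finset.prod_le_prod' (fun i _ => hS i.succ)
        _ = N ^ m := by simp [Finset.prod_const]
    calc N * Z.card ≤ N * (Z₁.card + Z₂.card) := Nat.mul_le_mul_left _ hcard
      _ = N * Z₁.card + N * Z₂.card := by ring
      _ ≤ N * (N * W₁.card) + N * (k * N ^ m) := by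
          gcongr
          exact le_trans hZ2card (Nat.mul_le_mul_left _ hW2)
      _ ≤ N * (c.totalDegree * N ^ m) + N * (k * N ^ m) := by
          gcongr
      _ = (c.totalDegree + k) * N ^ (m + 1) := by ring
      _ ≤ p.totalDegree * N ^ (m + 1) := Nat.mul_le_mul_right _ hdegs

/-! ### Density of zero sets of nonzero polynomials -/

set_option maxHeartbeats 1000000 in
lemma aux_density (K L : ℕ) (hK : 0 < K) (hL : 0 < L) (E : Set (Fin K × Fin L → ℤ))
    (G : MvPolynomial (Fin K × Fin L) ℝ) (hG : G ≠ 0)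
    (hzero : ∀ h : Fin K × Fin L → ℤ, h ∈ E →
      MvPolynomial.eval (fun w => ((h w : ℤ) : ℝ)) G = 0) :
    upperBanachDensity E = 0 := by
  classical
  set e : Fin K × Fin L ≃ Fin (K * L) := finProdFinEquiv with he
  set G' : MvPolynomial (Fin (K * L)) ℝ := MvPolynomial.rename e G with hG'def
  have hG'ne : G' ≠ 0 := by
    intro h0
    exact hG (MvPolynomial.rename_injective e e.injective (by rw [map_zero]; exact h0))
  set d := G'.totalDegree with hd
  have key : ∀ (N : ℕ) (t : Fin K × Fin L → ℤ) (B : Finset (Fin K × Fin L → ℤ)),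
      (∀ x ∈ B, (∀ w, (1 : ℤ) ≤ x w ∧ x w ≤ (N : ℤ)) ∧ x + t ∈ E) →
      N * B.card ≤ d * N ^ (K * L) := by
    intro N t B hB
    set S : Fin (K * L) → Finset ℝ :=
      fun j => (Finset.Icc (1 + t (e.symm j)) ((N : ℤ) + t (e.symm j))).image
        (fun z : ℤ => (z : ℝ)) with hS
    have hScard : ∀ j, (S j).card ≤ N := by
      intro j
      rw [hS]
      rw [Finset.card_image_of_injective _ Int.cast_injective, Int.card_Icc]
      have h1 : ((N : ℤ) + t (e.symm j) + 1 - (1 + t (e.symm j))) = (N : ℤ) := by ring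
      rw [h1]
      simp
    have hBle : B.card ≤ ((Fintype.piFinset S).filter
        (fun y => MvPolynomial.eval y G' = 0)).card := by
      apply Finset.card_le_card_of_injOn
        (f := fun x => fun j => ((x (e.symm j) + t (e.symm j) : ℤ) : ℝ))
      · intro x hx
        obtain ⟨hbox, hmem⟩ := hB x hx
        rw [Finset.mem_coe, Finset.mem_filter]
        constructor
        · rw [Fintype.mem_piFinset]
          intro j
          refine Finset.mem_image.mpr ⟨x (e.symm j) + t (e.symm j), ?_, rfl⟩
          rw [Finset.mem_Icc]
          have := hbox (e.symm j)
          omega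
        · rw [hG'def, MvPolynomial.eval_rename]
          have hcomp : ((fun j => ((x (e.symm j) + t (e.symm j) : ℤ) : ℝ)) ∘ e)
              = fun w => (((x + t) w : ℤ) : ℝ) := by
            funext w
            simp [Function.comp, Equiv.symm_apply_apply]
          rw [hcomp]
          exact hzero (x + t) hmem
      · intro x hx y hy hxy
        funext w
        have h2 := congrFun hxy (e w)
        simp only [Equiv.symm_apply_apply] at h2
        have h3 : x w + t w = y w + t w := by exact_mod_cast h2
        omega
    calc N * B.card
        ≤ N * ((Fintype.piFinset S).filter (fun y => MvPolynomial.eval y G' = 0)).card :=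
          Nat.mul_le_mul_left _ hBle
      _ ≤ d * N ^ (K * L) := aux_SZ (K * L) G' hG'ne S N hScard
  unfold upperBanachDensity
  apply Filter.Tendsto.limsup_eq
  apply squeeze_zero' (g := fun N : ℕ => (d : ℝ) / (N : ℝ))
  · apply Filter.Eventually.of_forall
    intro N
    exact Real.iSup_nonneg fun t => by positivity
  · rw [Filter.eventually_atTop]
    refine ⟨1, fun N hN => ?_⟩
    apply ciSup_le
    intro t
    have hNpos : (0 : ℝ) < (N : ℝ) := by
      have : (1 : ℕ) ≤ N := hN
      exact_mod_cast Nat.lt_of_lt_of_le Nat.zero_lt_one this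
    have hmemB : ∀ x ∈ (Finset.Icc (fun _ => (1 : ℤ)) (fun _ => (N : ℤ))).filter
        (fun x => x + t ∈ E), (∀ w, (1 : ℤ) ≤ x w ∧ x w ≤ (N : ℤ)) ∧ x + t ∈ E := by
      intro x hx
      rw [Finset.mem_filter] at hx
      refine ⟨?_, hx.2⟩
      have h4 := Finset.mem_Icc.mp hx.1
      intro w
      exact ⟨h4.1 w, h4.2 w⟩
    have hbound := key N t _ hmemB
    rw [show Fintype.card (Fin K × Fin L) = K * L by simp]
    rw [div_le_div_iff₀ (by positivity) hNpos]
    calc ((((Finset.Icc (fun _ => (1 : ℤ)) (fun _ => (N : ℤ))).filter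
            fun x => x + t ∈ E).card : ℝ)) * (N : ℝ)
        = (N : ℝ) * (((Finset.Icc (fun _ => (1 : ℤ)) (fun _ => (N : ℤ))).filter
            fun x => x + t ∈ E).card : ℝ) := by ring
      _ ≤ (d : ℝ) * (N : ℝ) ^ (K * L) := by exact_mod_cast hbound
  · exact tendsto_const_div_atTop_nhds_zero_nat (d : ℝ)

set_option maxHeartbeats 1600000

/-- **Lemma.** If `Q` is homogeneous of degree `> K` and `Q ∉ ℚ[n] + ℝ`, then the set of
`(h₁,…,h_K)` for which `Δ^K Q(·, h₁, …, h_K) ∈ ℚ[n] + ℝ` has upper Banach density `0`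
(equivalently, its complement has density `1`). -/
theorem stmt12 (K L : ℕ) (hK : 0 < K) (hL : 0 < L) (D : ℕ)
    (Q : MvPolynomial (Fin L) ℝ) (hhom : Q.IsHomogeneous D) (hdeg : K < D)
    (hirr : ¬ IsRatPlusConst (fun n => MvPolynomial.eval (fun i => ((n i : ℤ) : ℝ)) Q)) :
    upperBanachDensity {h : Fin K × Fin L → ℤ |
      IsRatPlusConst (fun n =>
        deltaIter K (fun n' => MvPolynomial.eval (fun i => ((n' i : ℤ) : ℝ)) Q) n
          (fun i l => h (i, l)))} = 0 := by
  classical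
  -- An irrational coefficient of `Q`
  obtain ⟨m₀, hm₀⟩ : ∃ m₀ : Fin L →₀ ℕ,
      MvPolynomial.coeff m₀ Q ∉ Set.range (algebraMap ℚ ℝ) := by
    by_contra hcon
    push_neg at hcon
    apply hirr
    refine ⟨∑ m ∈ Q.support, MvPolynomial.monomial m (hcon m).choose, 0, fun n => ?_⟩
    have hmap : MvPolynomial.map (algebraMap ℚ ℝ)
        (∑ m ∈ Q.support, MvPolynomial.monomial m (hcon m).choose) = Q := by
      apply MvPolynomial.ext
      intro m
      rw [MvPolynomial.coeff_map, aux_coeff_sum_monomial]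
      by_cases hm : m ∈ Q.support
      · rw [if_pos hm]
        exact (hcon m).choose_spec
      · rw [if_neg hm, map_zero]
        exact (MvPolynomial.notMem_support_iff.mp hm).symm
    rw [hmap, add_zero]
  -- A `ℚ`-linear functional `φ : ℝ → ℝ` with `φ(ℚ) = 0` and `φ(coeff m₀ Q) = 1`
  have hα1 : MvPolynomial.coeff m₀ Q ∉ ({1} : Set ℝ) := by
    intro hm
    rw [Set.mem_singleton_iff] at hm
    exact hm₀ ⟨1, by rw [map_one, hm]⟩
  have hαspan : MvPolynomial.coeff m₀ Q ∉ Submodule.span ℚ ({1} : Set ℝ) := by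
    intro hmem
    rw [Submodule.mem_span_singleton] at hmem
    obtain ⟨q, hq⟩ := hmem
    exact hm₀ ⟨q, by rw [eq_ratCast (algebraMap ℚ ℝ) q, ← Rat.smul_one_eq_cast, hq]⟩
  have hli : LinearIndependent ℚ
      ((↑) : (insert (MvPolynomial.coeff m₀ Q) {1} : Set ℝ) → ℝ) :=
    (linearIndepOn_id_insert hα1).mpr ⟨(linearIndepOn_singleton_iff (R := ℚ) (v := id)).mpr one_ne_zero, hαspan⟩
  set b := Module.Basis.extend hli with hb
  have hαmem : MvPolynomial.coeff m₀ Q ∈ LinearIndepOn.extend (show LinearIndepOn ℚ id (insert (MvPolynomial.coeff m₀ Q) {1} : Set ℝ) from hli) (Set.subset_univ _) :=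
    LinearIndepOn.subset_extend (show LinearIndepOn ℚ id (insert (MvPolynomial.coeff m₀ Q) {1} : Set ℝ) from hli) _ (Set.mem_insert _ _)
  have h1mem : (1 : ℝ) ∈ LinearIndepOn.extend (show LinearIndepOn ℚ id (insert (MvPolynomial.coeff m₀ Q) {1} : Set ℝ) from hli) (Set.subset_univ _) :=
    LinearIndepOn.subset_extend (show LinearIndepOn ℚ id (insert (MvPolynomial.coeff m₀ Q) {1} : Set ℝ) from hli) _ (Set.mem_insert_of_mem _ rfl)
  set φ : ℝ →ₗ[ℚ] ℝ := (Algebra.linearMap ℚ ℝ).comp (b.coord ⟨_, hαmem⟩) with hφdef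
  have hφapp : ∀ x : ℝ, φ x = ((b.coord ⟨_, hαmem⟩ x : ℚ) : ℝ) := by
    intro x
    rw [hφdef]
    simp [LinearMap.comp_apply, Algebra.linearMap_apply, eq_ratCast]
  have hφα : φ (MvPolynomial.coeff m₀ Q) = 1 := by
    rw [hφapp]
    have h1 : b ⟨_, hαmem⟩ = MvPolynomial.coeff m₀ Q := Module.Basis.extend_apply_self hli _
    have hr := b.repr_self ⟨MvPolynomial.coeff m₀ Q, hαmem⟩
    rw [h1] at hr
    rw [Module.Basis.coord_apply, hr, Finsupp.single_eq_same]
    norm_num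
  have hφ1 : φ (1 : ℝ) = 0 := by
    rw [hφapp]
    have h3 : b ⟨(1 : ℝ), h1mem⟩ = (1 : ℝ) := Module.Basis.extend_apply_self hli _
    have hr := b.repr_self ⟨(1 : ℝ), h1mem⟩
    rw [h3] at hr
    rw [Module.Basis.coord_apply, hr]
    rw [Finsupp.single_eq_of_ne ?_]
    · norm_num
    · intro hcontra
      exact hm₀ ⟨1, by rw [map_one]; exact (congrArg Subtype.val hcontra).symm⟩
  have hφrat : ∀ q : ℚ, φ ((q : ℝ)) = 0 := by
    intro q
    have h1 : ((q : ℝ)) = q • (1 : ℝ) := (Rat.smul_one_eq_cast ℝ q).symm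
    rw [h1, map_smul, hφ1, smul_zero]
  -- The polynomial `Qφ` obtained by applying `φ` to the coefficients of `Q`
  obtain ⟨Qφ, hQφcoeff, hFφ⟩ : ∃ Qφ : MvPolynomial (Fin L) ℝ,
      (∀ m, MvPolynomial.coeff m Qφ = φ (MvPolynomial.coeff m Q)) ∧
      (∀ n : Fin L → ℤ, MvPolynomial.eval (fun i => ((n i : ℤ) : ℝ)) Qφ
        = φ (MvPolynomial.eval (fun i => ((n i : ℤ) : ℝ)) Q)) := by
    refine ⟨∑ m ∈ Q.support, MvPolynomial.monomial m (φ (MvPolynomial.coeff m Q)), ?_, ?_⟩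
    · intro m
      rw [aux_coeff_sum_monomial]
      by_cases hm : m ∈ Q.support
      · rw [if_pos hm]
      · rw [if_neg hm, MvPolynomial.notMem_support_iff.mp hm, map_zero]
    · intro n
      conv_rhs => rw [← MvPolynomial.support_sum_monomial_coeff Q]
      simp only [map_sum]
      refine Finset.sum_congr rfl fun m _ => ?_
      rw [MvPolynomial.eval_monomial, MvPolynomial.eval_monomial]
      have hz : (Finsupp.prod m fun i e => ((n i : ℤ) : ℝ) ^ e)
          = (((Finsupp.prod m fun i e => (n i) ^ e) : ℤ) : ℝ) := by
        rw [Finsupp.prod, Finsupp.prod]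
        push_cast
        rfl
      rw [hz]
      have h4 : MvPolynomial.coeff m Q * (((Finsupp.prod m fun i e => (n i) ^ e) : ℤ) : ℝ)
          = (Finsupp.prod m fun i e => (n i) ^ e) • MvPolynomial.coeff m Q := by
        rw [zsmul_eq_mul]
        ring
      rw [h4, map_zsmul, zsmul_eq_mul]
      ring
  have hQφne : Qφ ≠ 0 := by
    intro h0
    have h5 := hQφcoeff m₀
    rw [h0, MvPolynomial.coeff_zero] at h5
    exact zero_ne_one (h5.trans hφα)
  have hQφhom : Qφ.IsHomogeneous D := by
    intro dd hdd
    refine hhom (fun h0 => hdd ?_)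
    rw [hQφcoeff, h0, map_zero]
  -- A point where `Qφ` does not vanish
  obtain ⟨v, hv⟩ : ∃ v : Fin L → ℤ,
      MvPolynomial.eval (fun i => ((v i : ℤ) : ℝ)) Qφ ≠ 0 := by
    by_contra hcon
    push_neg at hcon
    exact hQφne (aux_int_vanish Qφ hcon)
  -- Homogeneity of the evaluation
  have hhomeval : ∀ t : ℤ, MvPolynomial.eval (fun i => (((t • v) i : ℤ) : ℝ)) Qφ
      = ((t : ℤ) : ℝ) ^ D * MvPolynomial.eval (fun i => ((v i : ℤ) : ℝ)) Qφ := by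
    intro t
    have hpt : (fun i => (((t • v) i : ℤ) : ℝ)) = fun i => ((t : ℤ) : ℝ) * ((v i : ℤ) : ℝ) := by
      funext i
      simp only [Pi.smul_apply, smul_eq_mul]
      push_cast
      ring
    rw [hpt, MvPolynomial.eval_eq, MvPolynomial.eval_eq, Finset.mul_sum]
    refine Finset.sum_congr rfl fun m hm => ?_
    have hw : ∑ i ∈ m.support, m i = D := by
      have h6 := hQφhom (MvPolynomial.mem_support_iff.mp hm)
      have h7 : Finsupp.degree m = D := by rw [Finsupp.degree_eq_weight_one]; exact h6
      exact h7
    simp_rw [mul_pow]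
    rw [Finset.prod_mul_distrib, Finset.prod_pow_eq_pow_sum, hw]
    ring
  -- Evaluation of `bind₁`
  have heb : ∀ (σf : Fin L → MvPolynomial (Fin K × Fin L) ℝ) (p : MvPolynomial (Fin L) ℝ)
      (y : Fin K × Fin L → ℝ),
      MvPolynomial.eval y (MvPolynomial.bind₁ σf p)
        = MvPolynomial.eval (fun l => MvPolynomial.eval y (σf l)) p := by
    intro σf p y
    show MvPolynomial.eval₂Hom (RingHom.id ℝ) y (MvPolynomial.bind₁ σf p) = _
    rw [MvPolynomial.eval₂Hom_bind₁]
    rfl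
  -- The polynomial in the `h` variables computing `Δ^K Qφ(n₀, ·)`
  obtain ⟨gp, hgp⟩ : ∃ gp : (Fin L → ℤ) → MvPolynomial (Fin K × Fin L) ℝ,
      ∀ (n₀ : Fin L → ℤ) (hh : Fin K × Fin L → ℤ),
        MvPolynomial.eval (fun w => ((hh w : ℤ) : ℝ)) (gp n₀)
          = deltaIter K (fun n' => MvPolynomial.eval (fun i => ((n' i : ℤ) : ℝ)) Qφ) n₀
              (fun i l => hh (i, l)) := by
    refine ⟨fun n₀ => ∑ S ∈ (Finset.univ : Finset (Fin K)).powerset,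
      MvPolynomial.C ((-1 : ℝ) ^ (K + S.card)) *
        MvPolynomial.bind₁
          (fun l => MvPolynomial.C ((n₀ l : ℤ) : ℝ) + ∑ i ∈ S, MvPolynomial.X (i, l)) Qφ,
      fun n₀ hh => ?_⟩
    rw [deltaIter_sum, map_sum]
    refine Finset.sum_congr rfl fun S _ => ?_
    rw [map_mul, MvPolynomial.eval_C, heb]
    congr 1
    have hpt : (fun l => MvPolynomial.eval (fun w => ((hh w : ℤ) : ℝ))
          (MvPolynomial.C ((n₀ l : ℤ) : ℝ) + ∑ i ∈ S, MvPolynomial.X (i, l)))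
        = fun i => (((n₀ + ∑ i ∈ S, fun l => hh (i, l)) i : ℤ) : ℝ) := by
      funext l
      simp only [map_add, MvPolynomial.eval_C, map_sum, MvPolynomial.eval_X, Pi.add_apply,
        Finset.sum_apply]
      push_cast
      ring
    rw [hpt]
  -- Nonconstancy of `Δ^K Qφ` in `n`
  obtain ⟨n₀, h₀, hne⟩ : ∃ (n₀ : Fin L → ℤ) (h₀ : Fin K → Fin L → ℤ),
      deltaIter K (fun n' => MvPolynomial.eval (fun i => ((n' i : ℤ) : ℝ)) Qφ) n₀ h₀
        ≠ deltaIter K (fun n' => MvPolynomial.eval (fun i => ((n' i : ℤ) : ℝ)) Qφ) 0 h₀ := by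
    by_contra hcon
    push_neg at hcon
    set p₀ : Polynomial ℝ :=
      Polynomial.C (MvPolynomial.eval (fun i => ((v i : ℤ) : ℝ)) Qφ) * Polynomial.X ^ D
      with hp₀
    have hdeg0 : p₀.natDegree = D := Polynomial.natDegree_C_mul_X_pow D _ hv
    have hq : ∀ t : ℤ, MvPolynomial.eval (fun i => (((t • v) i : ℤ) : ℝ)) Qφ
        = p₀.eval ((t : ℤ) : ℝ) := by
      intro t
      rw [hp₀]
      simp only [Polynomial.eval_mul, Polynomial.eval_pow, Polynomial.eval_C, Polynomial.eval_X]
      rw [hhomeval t]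
      ring
    have hcst : ∀ t : ℤ, (auxSd^[K] p₀).eval ((t : ℤ) : ℝ)
        = (auxSd^[K] p₀).eval (((0 : ℤ) : ℤ) : ℝ) := by
      intro t
      rw [← deltaIter_const (fun n' => MvPolynomial.eval (fun i => ((n' i : ℤ) : ℝ)) Qφ)
          v p₀ hq K t,
        ← deltaIter_const (fun n' => MvPolynomial.eval (fun i => ((n' i : ℤ) : ℝ)) Qφ)
          v p₀ hq K 0]
      have h0v : (0 : ℤ) • v = (0 : Fin L → ℤ) := zero_smul _ _
      rw [h0v]
      exact hcon (t • v) (fun _ => v)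
    obtain ⟨hne0, hdegK⟩ := auxSd_iter K p₀ (by rw [hdeg0]; exact hdeg)
    have hz : auxSd^[K] p₀ - Polynomial.C ((auxSd^[K] p₀).eval (((0 : ℤ) : ℤ) : ℝ)) = 0 := by
      apply aux_poly_int_vanish
      intro t
      rw [Polynomial.eval_sub, Polynomial.eval_C, hcst t, sub_self]
    rw [sub_eq_zero] at hz
    have hdz : (auxSd^[K] p₀).natDegree = 0 := by rw [hz]; exact Polynomial.natDegree_C _
    omega
  -- The final polynomial `G`
  have hGne : gp n₀ - gp 0 ≠ 0 := by
    intro h0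
    apply hne
    have h1 := hgp n₀ (fun w => h₀ w.1 w.2)
    have h2 := hgp 0 (fun w => h₀ w.1 w.2)
    have h3 := congrArg (MvPolynomial.eval fun w : Fin K × Fin L => ((h₀ w.1 w.2 : ℤ) : ℝ)) h0
    rw [map_sub, map_zero, sub_eq_zero, h1, h2] at h3
    exact h3
  refine aux_density K L hK hL _ (gp n₀ - gp 0) hGne ?_
  intro hh hmem
  simp only [Set.mem_setOf_eq] at hmem
  obtain ⟨R, c, hRc0⟩ := hmem
  have hRc : ∀ n : Fin L → ℤ,
      deltaIter K (fun n' => MvPolynomial.eval (fun i => ((n' i : ℤ) : ℝ)) Q) n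
          (fun i l => hh (i, l))
        = MvPolynomial.eval (fun i => ((n i : ℤ) : ℝ))
            (MvPolynomial.map (algebraMap ℚ ℝ) R) + c := hRc0
  have hconst : ∀ n : Fin L → ℤ,
      deltaIter K (fun n' => MvPolynomial.eval (fun i => ((n' i : ℤ) : ℝ)) Qφ) n
        (fun i l => hh (i, l)) = φ c := by
    intro n
    have hFphi : (fun n' : Fin L → ℤ => MvPolynomial.eval (fun i => ((n' i : ℤ) : ℝ)) Qφ)
        = fun x : Fin L → ℤ => φ (MvPolynomial.eval (fun i => ((x i : ℤ) : ℝ)) Q) := by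
      funext x
      exact hFφ x
    rw [hFphi, deltaIter_linmap, hRc n, map_add]
    have hval : MvPolynomial.eval (fun i => ((n i : ℤ) : ℝ))
        (MvPolynomial.map (algebraMap ℚ ℝ) R) ∈ Set.range ((↑) : ℚ → ℝ) := by
      refine ⟨∑ dd ∈ R.support, MvPolynomial.coeff dd R
        * ∏ i ∈ dd.support, ((n i : ℤ) : ℚ) ^ dd i, ?_⟩
      rw [MvPolynomial.eval_map, MvPolynomial.eval₂_eq]
      push_cast
      refine Finset.sum_congr rfl fun dd _ => ?_
      rw [eq_ratCast (algebraMap ℚ ℝ) (MvPolynomial.coeff dd R)]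
    obtain ⟨qq, hqq⟩ := hval
    rw [← hqq, hφrat qq, zero_add]
  have h1 := hgp n₀ hh
  have h2 := hgp 0 hh
  rw [map_sub, h1, h2, hconst n₀, hconst 0, sub_self]
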